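/- Let L be a finitely generated free abelian group with involutive automorphism θ, let Q ⊆ L be a θ-stable finite-index subgroup, and let L₋ = {ν ∈ L : θ(ν) = −ν}, Q₋ = Q ∩ L₋, and L̃₋ the image of L under the projection ν ↦ (ν − θ(ν))/2 inside L ⊗ ℚ. Then there is a group isomorphism (L₋ + Q)/((1−θ)(L) + Q) ≅ L₋/(2L̃₋ + Q₋). -/
import Mathlib


/-- For a lattice `L` with involution `θ` and a `θ`-stable finite-index
subgroup `Q`, with `L₋ = {ν | θν = -ν}`, `Q₋ = Q ∩ L₋`, and
`(1-θ)(L) = 2L̃₋` (the image of twice the projection to the `(-1)`-eigenspace),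
there is a group isomorphism `(L₋ + Q)/((1-θ)(L) + Q) ≅ L₋/(2L̃₋ + Q₋)`. -/
theorem stmt_16 {L : Type*} [AddCommGroup L] [Module.Free ℤ L] [Module.Finite ℤ L]
    (θ : L ≃+ L) (hθ : ∀ x, θ (θ x) = x)
    (Q : AddSubgroup L) (hQ : ∀ q ∈ Q, θ q ∈ Q) (hfin : Q.FiniteIndex)
    (Lm A B : AddSubgroup L)
    (hLm : ∀ x : L, x ∈ Lm ↔ θ x = -x)
    (hA : ∀ x : L, x ∈ A ↔ ∃ μ : L, ∃ q ∈ Q, x = (μ - θ μ) + q)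
    (hB : ∀ x : L, x ∈ B ↔ ∃ μ : L, ∃ q ∈ Q ⊓ Lm, x = (μ - θ μ) + q) :
    A ≤ Lm ⊔ Q ∧ B ≤ Lm ∧
    Nonempty ((↥(Lm ⊔ Q) ⧸ A.addSubgroupOf (Lm ⊔ Q)) ≃+
      (Lm ⧸ B.addSubgroupOf Lm)) := by
  have hmθ : ∀ μ : L, μ - θ μ ∈ Lm := by
    intro μ; rw [hLm, map_sub, hθ]; abel
  have hAle : A ≤ Lm ⊔ Q := by
    intro x hx
    obtain ⟨μ, q, hq, rfl⟩ := (hA x).mp hx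
    exact add_mem (AddSubgroup.mem_sup_left (hmθ μ)) (AddSubgroup.mem_sup_right hq)
  have hBle : B ≤ Lm := by
    intro x hx
    obtain ⟨μ, q, hq, rfl⟩ := (hB x).mp hx
    exact add_mem (hmθ μ) hq.2
  have hAB : ∀ x : L, x ∈ Lm → (x ∈ A ↔ x ∈ B) := by
    intro x hxLm
    constructor
    · intro hx
      obtain ⟨μ, q, hq, hxe⟩ := (hA x).mp hx
      have hqLm : q ∈ Lm := by
        have : q = x - (μ - θ μ) := by rw [hxe]; abel
        rw [this]; exact sub_mem hxLm (hmθ μ)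
      exact (hB x).mpr ⟨μ, q, ⟨hq, hqLm⟩, hxe⟩
    · intro hx
      obtain ⟨μ, q, hq, hxe⟩ := (hB x).mp hx
      exact (hA x).mpr ⟨μ, q, hq.1, hxe⟩
  refine ⟨hAle, hBle, ?_⟩
  set K := Lm ⊔ Q with hK
  let f : Lm →+ (K ⧸ A.addSubgroupOf K) :=
    (QuotientAddGroup.mk' (A.addSubgroupOf K)).comp (AddSubgroup.inclusion le_sup_left)
  have hsurj : Function.Surjective f := by
    intro y
    refine QuotientAddGroup.induction_on y ?_
    intro z
    obtain ⟨x, hx, q, hq, hxq⟩ := AddSubgroup.mem_sup.mp z.2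
    refine ⟨⟨x, hx⟩, ?_⟩
    have hdiff : ((AddSubgroup.inclusion (le_sup_left : Lm ≤ K) ⟨x, hx⟩) - z : K) ∈
        A.addSubgroupOf K := by
      rw [AddSubgroup.mem_addSubgroupOf]
      have hneg : ((AddSubgroup.inclusion (le_sup_left : Lm ≤ K) ⟨x, hx⟩) - z : K) = x - z := rfl
      rw [hneg]
      rw [hA]
      refine ⟨0, -q, neg_mem hq, ?_⟩
      rw [← hxq, map_zero]
      abel
    have := (QuotientAddGroup.eq_iff_sub_mem).mpr hdiff
    exact this
  have hker : f.ker = B.addSubgroupOf Lm := by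
    ext x
    simp only [f, AddMonoidHom.mem_ker, AddMonoidHom.comp_apply,
      QuotientAddGroup.mk'_apply, QuotientAddGroup.eq_zero_iff,
      AddSubgroup.mem_addSubgroupOf, AddSubgroup.coe_inclusion]
    exact hAB x x.2
  exact ⟨((QuotientAddGroup.quotientAddEquivOfEq hker.symm).trans
    (QuotientAddGroup.quotientKerEquivOfSurjective f hsurj)).symm⟩
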